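/- arXiv:1203.1696 — 4 statements merged into one kernel-verified Lean document; each statement's English description precedes it below -/
import Mathlib

section
/- For the group law F(x,y) = (x + y + bxy)/(1 − cxy) over a commutative ring R with b² − 4c invertible, F is a one-dimensional formal group law: F(x,0) = x, F(x,y) = F(y,x), and F(F(x,y),z) = F(x,F(y,z)) as formal power series. -/
open MvPowerSeries

private theorem stmt8_cancel {σ : Type*} {R : Type*} [CommRing R]
    {f g A B : MvPowerSeries σ R}
    (hf : MvPowerSeries.constantCoeff (σ := σ) (R := R) f = 1)
    (hg : MvPowerSeries.constantCoeff (σ := σ) (R := R) g = 1)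
    (hAB : A * g = B * f) :
    A * MvPowerSeries.invOfUnit f 1 = B * MvPowerSeries.invOfUnit g 1 := by
  have hf' : f * MvPowerSeries.invOfUnit f 1 = 1 :=
    MvPowerSeries.mul_invOfUnit f 1 (by simp [hf])
  have hg' : g * MvPowerSeries.invOfUnit g 1 = 1 :=
    MvPowerSeries.mul_invOfUnit g 1 (by simp [hg])
  calc A * MvPowerSeries.invOfUnit f 1
      = A * MvPowerSeries.invOfUnit f 1 * (g * MvPowerSeries.invOfUnit g 1) := by
        rw [hg', mul_one]
    _ = (A * g) * MvPowerSeries.invOfUnit f 1 * MvPowerSeries.invOfUnit g 1 := by ring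
    _ = (B * f) * MvPowerSeries.invOfUnit f 1 * MvPowerSeries.invOfUnit g 1 := by rw [hAB]
    _ = B * (f * MvPowerSeries.invOfUnit f 1) * MvPowerSeries.invOfUnit g 1 := by ring
    _ = B * MvPowerSeries.invOfUnit g 1 := by rw [hf', mul_one]

/-- `F(x,y) = (x + y + bxy)/(1 − cxy)` over a commutative ring `R` with `b² − 4c`
invertible is a one-dimensional formal group law: `F(x,0) = x`, `F(x,y) = F(y,x)` and
`F(F(x,y),z) = F(x,F(y,z))` as formal power series (in three variables `x, y, z`). -/
theorem stmt_8 {R : Type*} [CommRing R] (b c : R) (h : IsUnit (b ^ 2 - 4 * c)) :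
    let F : MvPowerSeries (Fin 3) R → MvPowerSeries (Fin 3) R → MvPowerSeries (Fin 3) R :=
      fun p q => (p + q + MvPowerSeries.C (σ := Fin 3) (R := R) b * p * q) *
        MvPowerSeries.invOfUnit (1 - MvPowerSeries.C (σ := Fin 3) (R := R) c * p * q) 1
    F (X 0) 0 = X 0 ∧
    F (X 0) (X 1) = F (X 1) (X 0) ∧
    F (F (X 0) (X 1)) (X 2) = F (X 0) (F (X 1) (X 2)) := by
  intro F
  have hone : MvPowerSeries.invOfUnit (1 : MvPowerSeries (Fin 3) R) 1 = 1 := by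
    have h1 := MvPowerSeries.mul_invOfUnit (1 : MvPowerSeries (Fin 3) R) 1 (by simp)
    simpa using h1
  refine ⟨?_, ?_, ?_⟩
  · simp [F, hone]
  · simp only [F]
    rw [show MvPowerSeries.C (σ := Fin 3) (R := R) c * X 1 * X 0
        = MvPowerSeries.C (σ := Fin 3) (R := R) c * X 0 * X 1 by ring]
    congr 1
    ring
  · simp only [F]
    set D1 : MvPowerSeries (Fin 3) R := 1 - MvPowerSeries.C (σ := Fin 3) (R := R) c * X 0 * X 1 with hD1def
    set D2 : MvPowerSeries (Fin 3) R := 1 - MvPowerSeries.C (σ := Fin 3) (R := R) c * X 1 * X 2 with hD2def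
    set u : MvPowerSeries (Fin 3) R := MvPowerSeries.invOfUnit D1 1 with hudef
    set v : MvPowerSeries (Fin 3) R := MvPowerSeries.invOfUnit D2 1 with hvdef
    have hcu : MvPowerSeries.constantCoeff (σ := Fin 3) (R := R) u = 1 := by
      simp [hudef, MvPowerSeries.constantCoeff_invOfUnit]
    have hcv : MvPowerSeries.constantCoeff (σ := Fin 3) (R := R) v = 1 := by
      simp [hvdef, MvPowerSeries.constantCoeff_invOfUnit]
    have hD1 : D1 * u = 1 :=
      MvPowerSeries.mul_invOfUnit D1 1 (by simp [hD1def])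
    have hD2 : D2 * v = 1 :=
      MvPowerSeries.mul_invOfUnit D2 1 (by simp [hD2def])
    set N1 : MvPowerSeries (Fin 3) R :=
      X 0 + X 1 + MvPowerSeries.C (σ := Fin 3) (R := R) b * X 0 * X 1 with hN1def
    set N2 : MvPowerSeries (Fin 3) R :=
      X 1 + X 2 + MvPowerSeries.C (σ := Fin 3) (R := R) b * X 1 * X 2 with hN2def
    apply stmt8_cancel
    · simp [hN1def, hD1def, hcu]
    · simp [hN2def, hD2def, hcv]
    · -- A * g = B * f
      have hu : IsUnit (D1 * D2) :=
        (IsUnit.of_mul_eq_one _ hD1).mul (IsUnit.of_mul_eq_one _ hD2)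
      apply hu.mul_left_cancel
      set bb : MvPowerSeries (Fin 3) R := MvPowerSeries.C (σ := Fin 3) (R := R) b with hbb
      set cc : MvPowerSeries (Fin 3) R := MvPowerSeries.C (σ := Fin 3) (R := R) c with hcc
      calc D1 * D2 * ((N1 * u + X 2 + bb * (N1 * u) * X 2) * (1 - cc * X 0 * (N2 * v)))
          = ((N1 + bb * N1 * X 2) * (D1 * u) + X 2 * D1) *
              (D2 - cc * X 0 * N2 * (D2 * v)) := by ring
        _ = (N1 + X 2 * D1 + bb * N1 * X 2) * (D2 - cc * X 0 * N2) := by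
              rw [hD1, hD2]; ring
        _ = (X 0 * D2 + N2 + bb * X 0 * N2) * (D1 - cc * N1 * X 2) := by
              rw [hN1def, hN2def, hD1def, hD2def]; ring
        _ = ((N2 + bb * X 0 * N2) * (D2 * v) + X 0 * D2) *
              (D1 - cc * N1 * X 2 * (D1 * u)) := by rw [hD1, hD2]; ring
        _ = D1 * D2 * ((X 0 + N2 * v + bb * X 0 * (N2 * v)) * (1 - cc * (N1 * u) * X 2)) := by
              ring
end

section
/- The formal group law F(x,y) = (x + y + 3xy)/(1 − 3xy) over ℤ[1/3] is not isomorphic to the multiplicative formal group law over ℤ[1/3]: there is no power series f(t) = t + a₂t² + … ∈ ℤ[1/3]⟦t⟧ with f(F(x,y)) = f(x) + f(y) + f(x)f(y). -/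
open MvPowerSeries

/-- Substitution of a one-variable power series `f` into a multivariate power series `F`
with zero constant term: the coefficient of `f ∘ F` at a multidegree `d` is
`∑ₙ (coeff n f) · (coeff d Fⁿ)`, a finite sum since `coeff d (Fⁿ) = 0` for `n > |d|`. -/
noncomputable def composePS {R : Type*} [CommRing R]
    (f : PowerSeries R) (F : MvPowerSeries (Fin 2) R) : MvPowerSeries (Fin 2) R :=
  fun d => ∑ n ∈ Finset.range (d.sum (fun _ m => m) + 1),
    PowerSeries.coeff (R := R) n f * MvPowerSeries.coeff (R := R) d (F ^ n)

/-! ### Auxiliary machinery -/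

/-- The multidegree `(i, j)` on `Fin 2`. -/
noncomputable def ee (i j : ℕ) : Fin 2 →₀ ℕ := Finsupp.single 0 i + Finsupp.single 1 j

@[simp] lemma ee_apply0 (i j : ℕ) : ee i j 0 = i := by simp [ee]
@[simp] lemma ee_apply1 (i j : ℕ) : ee i j 1 = j := by simp [ee, Finsupp.single_apply]

lemma ee_eta (d : Fin 2 →₀ ℕ) : ee (d 0) (d 1) = d := by
  ext a; fin_cases a <;> simp

@[simp] lemma ee_add (i j k l : ℕ) : ee i j + ee k l = ee (i+k) (j+l) := by
  ext a; fin_cases a <;> simp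

@[simp] lemma ee_eq_iff (i j k l : ℕ) : ee i j = ee k l ↔ i = k ∧ j = l := by
  constructor
  · intro h
    constructor
    · simpa using congrFun (congrArg (↑·) h) 0
    · simpa using congrFun (congrArg (↑·) h) 1
  · rintro ⟨rfl, rfl⟩; rfl

@[simp] lemma ee_le_iff (i j k l : ℕ) : ee i j ≤ ee k l ↔ i ≤ k ∧ j ≤ l := by
  constructor
  · intro h; exact ⟨by simpa using h 0, by simpa using h 1⟩
  · intro ⟨h1, h2⟩ a; fin_cases a <;> simpa

@[simp] lemma ee_sub (i j k l : ℕ) : ee i j - ee k l = ee (i-k) (j-l) := by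
  ext a; fin_cases a <;> simp [Finsupp.tsub_apply]

lemma ee_zero : ee 0 0 = 0 := by ext a; fin_cases a <;> simp

@[simp] lemma ee_eq_zero_iff (i j : ℕ) : ee i j = 0 ↔ i = 0 ∧ j = 0 := by
  rw [← ee_zero, ee_eq_iff]

lemma ee_degree (i j : ℕ) : Finsupp.degree (ee i j) = i + j := by
  rw [show Finsupp.degree (ee i j) = ∑ a : Fin 2, (ee i j) a from
    Finset.sum_subset (Finset.subset_univ _)
      (fun x _ hx => by rwa [Finsupp.notMem_support_iff] at hx)]
  simp [Fin.sum_univ_two]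

lemma ee_sum (i j : ℕ) : (ee i j).sum (fun _ m => m) = i + j := by
  rw [Finsupp.sum_fintype _ _ (fun _ => rfl)]
  simp [Fin.sum_univ_two]

lemma ee_single0 (i : ℕ) : ee i 0 = Finsupp.single 0 i := by simp [ee]

lemma ee_single1 (j : ℕ) : ee 0 j = Finsupp.single 1 j := by simp [ee]

section Aux

variable (R : Type*) [CommRing R]

/-- The polynomial `x + y + 3xy` as a sum of monomials. -/
noncomputable def MM : MvPowerSeries (Fin 2) R :=
  monomial (R := R) (ee 1 0) 1 + monomial (R := R) (ee 0 1) 1 + monomial (R := R) (ee 1 1) 3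

/-- The formal group law `(x + y + 3xy)/(1 - 3xy)`. -/
noncomputable def FF : MvPowerSeries (Fin 2) R :=
  (X 0 + X 1 + 3 * X 0 * X 1) * MvPowerSeries.invOfUnit (1 - 3 * X 0 * X 1) 1

lemma coeffM_11 : coeff (R := R) (ee 1 1) (MM R) = 3 := by
  simp [MM, coeff_monomial]

lemma coeffM_10 : coeff (R := R) (ee 1 0) (MM R) = 1 := by
  simp [MM, coeff_monomial]

lemma coeffM_20 : coeff (R := R) (ee 2 0) (MM R) = 0 := by
  simp [MM, coeff_monomial]

lemma coeffM_21 : coeff (R := R) (ee 2 1) (MM R) = 0 := by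
  simp [MM, coeff_monomial]

lemma coeffM_31 : coeff (R := R) (ee 3 1) (MM R) = 0 := by
  simp [MM, coeff_monomial]

lemma coeffM2_11 : coeff (R := R) (ee 1 1) (MM R * MM R) = 2 := by
  simp [MM, add_mul, mul_add, monomial_mul_monomial, coeff_monomial]; norm_num

lemma coeffM2_21 : coeff (R := R) (ee 2 1) (MM R * MM R) = 6 := by
  simp [MM, add_mul, mul_add, monomial_mul_monomial, coeff_monomial]; norm_num

lemma coeffM3_21 : coeff (R := R) (ee 2 1) (MM R * MM R * MM R) = 3 := by
  simp [MM, add_mul, mul_add, monomial_mul_monomial, coeff_monomial]; norm_num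

lemma coeffM3_31 : coeff (R := R) (ee 3 1) (MM R * MM R * MM R) = 9 := by
  simp [MM, add_mul, mul_add, monomial_mul_monomial, coeff_monomial]; norm_num

lemma coeffM4_31 : coeff (R := R) (ee 3 1) (MM R * MM R * MM R * MM R) = 4 := by
  simp [MM, add_mul, mul_add, monomial_mul_monomial, coeff_monomial]; norm_num

lemma X_eq_mono (s : Fin 2) :
    (X s : MvPowerSeries (Fin 2) R) = monomial (R := R) (Finsupp.single s 1) 1 := rfl

lemma three_eq_mono : (3 : MvPowerSeries (Fin 2) R) = monomial (R := R) (ee 0 0) 3 := by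
  rw [ee_zero, monomial_zero_eq_C_apply, map_ofNat]

lemma hMM : (X 0 + X 1 + 3 * X 0 * X 1 : MvPowerSeries (Fin 2) R) = MM R := by
  rw [MM, X_eq_mono, X_eq_mono, three_eq_mono, monomial_mul_monomial, monomial_mul_monomial,
    ← ee_single0 1, ← ee_single1 1]
  norm_num

lemma q3_eq_mono : (3 : MvPowerSeries (Fin 2) R) * X 0 * X 1 = monomial (R := R) (ee 1 1) 3 := by
  rw [X_eq_mono, X_eq_mono, three_eq_mono, monomial_mul_monomial, monomial_mul_monomial,
    ← ee_single0 1, ← ee_single1 1]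
  norm_num

/-- The fundamental recursion `F = M + 3xy·F`. -/
lemma hFF : FF R = MM R + monomial (R := R) (ee 1 1) 3 * FF R := by
  have hc : constantCoeff (σ := Fin 2) (R := R) ((1 - 3 * X 0 * X 1 : MvPowerSeries (Fin 2) R))
      = ((1 : Rˣ) : R) := by
    simp [map_sub, map_mul, constantCoeff_X]
  have h1 : (1 - 3 * X 0 * X 1 : MvPowerSeries (Fin 2) R) *
      MvPowerSeries.invOfUnit (1 - 3 * X 0 * X 1) (1:Rˣ) = 1 :=
    mul_invOfUnit _ _ hc
  have key : (1 - 3 * X 0 * X 1 : MvPowerSeries (Fin 2) R) * FF R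
      = X 0 + X 1 + 3 * X 0 * X 1 := by
    rw [FF]
    calc (1 - 3 * X 0 * X 1 : MvPowerSeries (Fin 2) R) *
        ((X 0 + X 1 + 3 * X 0 * X 1) * MvPowerSeries.invOfUnit (1 - 3 * X 0 * X 1) 1)
        = (X 0 + X 1 + 3 * X 0 * X 1) *
          ((1 - 3 * X 0 * X 1) * MvPowerSeries.invOfUnit (1 - 3 * X 0 * X 1) 1) := by ring
      _ = X 0 + X 1 + 3 * X 0 * X 1 := by rw [h1, mul_one]
  have h2 : FF R = (X 0 + X 1 + 3 * X 0 * X 1) + (3 * X 0 * X 1) * FF R := by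
    linear_combination key
  rw [hMM, q3_eq_mono] at h2
  exact h2

lemma constCoeff_FF : coeff (R := R) 0 (FF R) = 0 := by
  rw [coeff_zero_eq_constantCoeff, FF, map_mul]
  simp [map_add, map_mul, constantCoeff_X]

lemma ord_mono (i j : ℕ) (a : R) : (i+j : ℕ) ≤ order (monomial (R := R) (ee i j) a) := by
  apply nat_le_order
  intro d hd
  rw [coeff_monomial]
  split_ifs with h
  · subst h; rw [ee_degree] at hd; omega
  · rfl

lemma ord_MM : (1:ℕ) ≤ order (MM R) := by
  apply nat_le_order
  intro d hd
  have hd0 : d = 0 := by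
    rw [← Finsupp.degree_eq_zero_iff]; omega
  subst hd0
  rw [← ee_zero]
  simp [MM, coeff_monomial]

lemma ord_FF : (1:ℕ) ≤ order (FF R) := by
  apply nat_le_order
  intro d hd
  have hd0 : d = 0 := by rw [← Finsupp.degree_eq_zero_iff]; omega
  subst hd0
  exact constCoeff_FF R

lemma ord_EE : (3:ℕ) ≤ order (FF R - MM R) := by
  have h : FF R - MM R = monomial (R := R) (ee 1 1) 3 * FF R := by linear_combination hFF R
  rw [h]
  calc ((3:ℕ) : ℕ∞) = ((2:ℕ) : ℕ∞) + ((1:ℕ) : ℕ∞) := by norm_num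
    _ ≤ order (monomial (R := R) (ee 1 1) 3) + order (FF R) :=
        add_le_add (by simpa using ord_mono R 1 1 3) (ord_FF R)
    _ ≤ _ := MvPowerSeries.le_order_mul

lemma ord_mul2 {A B : MvPowerSeries (Fin 2) R} {a b : ℕ} (hA : (a:ℕ) ≤ order A)
    (hB : (b:ℕ) ≤ order B) : ((a+b : ℕ) : ℕ∞) ≤ order (A*B) :=
  le_trans (by push_cast; exact add_le_add hA hB) MvPowerSeries.le_order_mul

lemma ord_add2 {A B : MvPowerSeries (Fin 2) R} {n : ℕ∞} (hA : n ≤ order A)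
    (hB : n ≤ order B) : n ≤ order (A+B) :=
  le_trans (le_min hA hB) min_order_le_add

lemma coeff_eq_of_sub_order {A B : MvPowerSeries (Fin 2) R} {d : Fin 2 →₀ ℕ} {n : ℕ}
    (h : (n:ℕ∞) ≤ order (A - B)) (hd : Finsupp.degree d < n) :
    coeff (R := R) d A = coeff (R := R) d B := by
  have h0 : coeff (R := R) d (A - B) = 0 :=
    coeff_of_lt_order (lt_of_lt_of_le (by exact_mod_cast hd) h)
  rw [map_sub, sub_eq_zero] at h0
  exact h0

lemma h0_FF : coeff (R := R) (ee 0 0) (FF R) = 0 := by rw [ee_zero]; exact constCoeff_FF R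

lemma cc_FF : constantCoeff (σ := Fin 2) (R := R) (FF R) = 0 := constCoeff_FF R

lemma cFF10 : coeff (R := R) (ee 1 0) (FF R) = 1 := by
  conv_lhs => rw [hFF R]
  simp [MM, coeff_monomial, coeff_monomial_mul]

lemma cFF20 : coeff (R := R) (ee 2 0) (FF R) = 0 := by
  conv_lhs => rw [hFF R]
  simp [MM, coeff_monomial, coeff_monomial_mul]

lemma cFF11 : coeff (R := R) (ee 1 1) (FF R) = 3 := by
  conv_lhs => rw [hFF R]
  simp [MM, coeff_monomial, coeff_monomial_mul, h0_FF, cc_FF]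

lemma cFF21 : coeff (R := R) (ee 2 1) (FF R) = 3 := by
  conv_lhs => rw [hFF R]
  simp [MM, coeff_monomial, coeff_monomial_mul, cFF10]

lemma cFF31 : coeff (R := R) (ee 3 1) (FF R) = 0 := by
  conv_lhs => rw [hFF R]
  simp [MM, coeff_monomial, coeff_monomial_mul, cFF20]

lemma trunc2 {d : Fin 2 →₀ ℕ} (hd : Finsupp.degree d < 4) :
    coeff (R := R) d (FF R * FF R) = coeff (R := R) d (MM R * MM R) := by
  refine coeff_eq_of_sub_order R (n := 4) ?_ hd
  have h : FF R * FF R - MM R * MM R = (FF R - MM R) * (FF R + MM R) := by ring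
  rw [h]
  exact ord_mul2 R (a := 3) (b := 1) (ord_EE R) (ord_add2 R (ord_FF R) (ord_MM R))

lemma trunc3 {d : Fin 2 →₀ ℕ} (hd : Finsupp.degree d < 5) :
    coeff (R := R) d (FF R * FF R * FF R) = coeff (R := R) d (MM R * MM R * MM R) := by
  refine coeff_eq_of_sub_order R (n := 5) ?_ hd
  have h : FF R * FF R * FF R - MM R * MM R * MM R
      = (FF R - MM R) * (FF R * FF R + FF R * MM R + MM R * MM R) := by ring
  rw [h]
  refine ord_mul2 R (a := 3) (b := 2) (ord_EE R) ?_
  refine ord_add2 R (ord_add2 R ?_ ?_) ?_ <;>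
    exact ord_mul2 R (a := 1) (b := 1) (by first | exact ord_FF R | exact ord_MM R)
      (by first | exact ord_FF R | exact ord_MM R)

lemma trunc4 {d : Fin 2 →₀ ℕ} (hd : Finsupp.degree d < 6) :
    coeff (R := R) d (FF R * FF R * FF R * FF R) = coeff (R := R) d (MM R * MM R * MM R * MM R) := by
  refine coeff_eq_of_sub_order R (n := 6) ?_ hd
  have h : FF R * FF R * FF R * FF R - MM R * MM R * MM R * MM R
      = (FF R - MM R) * (FF R * FF R * FF R + FF R * FF R * MM R
          + FF R * MM R * MM R + MM R * MM R * MM R) := by ring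
  rw [h]
  refine ord_mul2 R (a := 3) (b := 3) (ord_EE R) ?_
  refine ord_add2 R (ord_add2 R (ord_add2 R ?_ ?_) ?_) ?_ <;>
    refine ord_mul2 R (a := 2) (b := 1)
      (ord_mul2 R (a := 1) (b := 1)
        (by first | exact ord_FF R | exact ord_MM R)
        (by first | exact ord_FF R | exact ord_MM R))
      (by first | exact ord_FF R | exact ord_MM R)

/-- Degree ≤ 4 truncation of `F`. -/
noncomputable def PP : MvPowerSeries (Fin 2) R := MM R + monomial (R := R) (ee 1 1) 3 * MM R

lemma ord_PP : (1:ℕ) ≤ order (PP R) := by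
  refine ord_add2 R (ord_MM R) (le_trans ?_ (ord_mul2 R (a := 2) (b := 1)
    (by simpa using ord_mono R 1 1 3) (ord_MM R)))
  norm_num

lemma ord_FP : (5:ℕ) ≤ order (FF R - PP R) := by
  have h : FF R - PP R = monomial (R := R) (ee 1 1) 3 * (FF R - MM R) := by
    rw [PP]; linear_combination hFF R
  rw [h]
  exact ord_mul2 R (a := 2) (b := 3) (by simpa using ord_mono R 1 1 3) (ord_EE R)

lemma trunc2' {d : Fin 2 →₀ ℕ} (hd : Finsupp.degree d < 6) :
    coeff (R := R) d (FF R * FF R) = coeff (R := R) d (PP R * PP R) := by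
  refine coeff_eq_of_sub_order R (n := 6) ?_ hd
  have h : FF R * FF R - PP R * PP R = (FF R - PP R) * (FF R + PP R) := by ring
  rw [h]
  exact ord_mul2 R (a := 5) (b := 1) (ord_FP R) (ord_add2 R (ord_FF R) (ord_PP R))

lemma coeffP2_31 : coeff (R := R) (ee 3 1) (PP R * PP R) = 6 := by
  simp [PP, MM, add_mul, mul_add, monomial_mul_monomial, coeff_monomial]; norm_num

end Aux

section Comp

variable {R : Type*} [CommRing R] (f : PowerSeries R)

lemma coeff_composePS (G : MvPowerSeries (Fin 2) R) (d : Fin 2 →₀ ℕ) :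
    coeff (R := R) d (composePS f G) = ∑ n ∈ Finset.range (d.sum (fun _ m => m) + 1),
      PowerSeries.coeff (R := R) n f * MvPowerSeries.coeff (R := R) d (G ^ n) := rfl

lemma compX0 (i j : ℕ) : coeff (R := R) (ee i j) (composePS f (X 0))
    = if j = 0 then PowerSeries.coeff (R := R) i f else 0 := by
  rw [coeff_composePS, ee_sum]
  by_cases hj : j = 0
  · subst hj
    rw [if_pos rfl]
    have : ∀ n, coeff (R := R) (ee i 0) ((X 0 : MvPowerSeries (Fin 2) R) ^ n)
        = if i = n then 1 else 0 := by
      intro n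
      rw [coeff_X_pow, ← ee_single0]
      simp
    simp only [this, mul_ite, mul_one, mul_zero]
    rw [Finset.sum_ite_eq (Finset.range (i + 0 + 1)) i (fun n => PowerSeries.coeff (R := R) n f)]
    simp
  · rw [if_neg hj]
    apply Finset.sum_eq_zero
    intro n _
    rw [coeff_X_pow, ← ee_single0]
    simp [hj]

lemma compX1 (i j : ℕ) : coeff (R := R) (ee i j) (composePS f (X 1))
    = if i = 0 then PowerSeries.coeff (R := R) j f else 0 := by
  rw [coeff_composePS, ee_sum]
  by_cases hi : i = 0
  · subst hi
    rw [if_pos rfl]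
    have : ∀ n, coeff (R := R) (ee 0 j) ((X 1 : MvPowerSeries (Fin 2) R) ^ n)
        = if j = n then 1 else 0 := by
      intro n
      rw [coeff_X_pow, ← ee_single1]
      simp
    simp only [this, mul_ite, mul_one, mul_zero]
    rw [Finset.sum_ite_eq (Finset.range (0 + j + 1)) j (fun n => PowerSeries.coeff (R := R) n f)]
    simp
  · rw [if_neg hi]
    apply Finset.sum_eq_zero
    intro n _
    rw [coeff_X_pow, ← ee_single1]
    simp [hi]

lemma coeff_mulAB (i : ℕ) :
    coeff (R := R) (ee i 1) (composePS f (X 0) * composePS f (X 1))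
      = PowerSeries.coeff (R := R) i f * PowerSeries.coeff (R := R) 1 f := by
  rw [coeff_mul]
  rw [Finset.sum_eq_single (ee i 0, ee 0 1)]
  · rw [compX0, compX1]; simp
  · rintro ⟨p1, p2⟩ hp hne
    rw [Finset.HasAntidiagonal.mem_antidiagonal] at hp
    have h0 : p1 0 + p2 0 = i := by
      have := DFunLike.congr_fun hp 0
      simpa [ee, Finsupp.single_apply] using this
    have h1 : p1 1 + p2 1 = 1 := by
      have := DFunLike.congr_fun hp 1
      simpa [ee, Finsupp.single_apply] using this
    rw [← ee_eta p1, ← ee_eta p2, compX0, compX1]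
    by_cases hA : p1 1 = 0
    · by_cases hB : p2 0 = 0
      · exfalso
        apply hne
        have e1 : p1 = ee i 0 := by rw [← ee_eta p1, hA]; congr 1; omega
        have e2 : p2 = ee 0 1 := by rw [← ee_eta p2, hB]; congr 1; omega
        rw [e1, e2]
      · rw [if_neg hB, mul_zero]
    · rw [if_neg hA, zero_mul]
  · intro h
    exfalso
    apply h
    rw [Finset.HasAntidiagonal.mem_antidiagonal, ee_add]
    norm_num

end Comp

/-- The formal group law `F(x,y) = (x + y + 3xy)/(1 − 3xy)` over `ℤ[1/3]` is not
isomorphic to the multiplicative formal group law over `ℤ[1/3]`: there is no power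
series `f(t) = t + a₂t² + ⋯` with `f(F(x,y)) = f(x) + f(y) + f(x)f(y)`. -/
theorem stmt_10 :
    let R := Localization.Away (3 : ℤ)
    let F : MvPowerSeries (Fin 2) R :=
      (X 0 + X 1 + 3 * X 0 * X 1) * MvPowerSeries.invOfUnit (1 - 3 * X 0 * X 1) 1
    ¬∃ f : PowerSeries R,
      PowerSeries.coeff (R := R) 0 f = 0 ∧ PowerSeries.coeff (R := R) 1 f = 1 ∧
      composePS f F =
        composePS f (X 0) + composePS f (X 1) + composePS f (X 0) * composePS f (X 1) := by
  intro R F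
  rintro ⟨f, h0, h1, heq⟩
  have hF : F = FF R := rfl
  rw [hF] at heq
  -- coefficients of powers of F
  have c11_1 : coeff (R := R) (ee 1 1) (FF R ^ 1) = 3 := by rw [pow_one]; exact cFF11 R
  have c21_1 : coeff (R := R) (ee 2 1) (FF R ^ 1) = 3 := by rw [pow_one]; exact cFF21 R
  have c31_1 : coeff (R := R) (ee 3 1) (FF R ^ 1) = 0 := by rw [pow_one]; exact cFF31 R
  have p2 : FF R ^ 2 = FF R * FF R := by ring
  have p3 : FF R ^ 3 = FF R * FF R * FF R := by ring
  have p4 : FF R ^ 4 = FF R * FF R * FF R * FF R := by ring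
  have c11_2 : coeff (R := R) (ee 1 1) (FF R ^ 2) = 2 := by
    rw [p2, trunc2 R (by rw [ee_degree]; norm_num)]; exact coeffM2_11 R
  have c21_2 : coeff (R := R) (ee 2 1) (FF R ^ 2) = 6 := by
    rw [p2, trunc2 R (by rw [ee_degree]; norm_num)]; exact coeffM2_21 R
  have c31_2 : coeff (R := R) (ee 3 1) (FF R ^ 2) = 6 := by
    rw [p2, trunc2' R (by rw [ee_degree]; norm_num)]; exact coeffP2_31 R
  have c21_3 : coeff (R := R) (ee 2 1) (FF R ^ 3) = 3 := by
    rw [p3, trunc3 R (by rw [ee_degree]; norm_num)]; exact coeffM3_21 R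
  have c31_3 : coeff (R := R) (ee 3 1) (FF R ^ 3) = 9 := by
    rw [p3, trunc3 R (by rw [ee_degree]; norm_num)]; exact coeffM3_31 R
  have c31_4 : coeff (R := R) (ee 3 1) (FF R ^ 4) = 4 := by
    rw [p4, trunc4 R (by rw [ee_degree]; norm_num)]; exact coeffM4_31 R
  -- the three coefficient equations
  have E1 := congrArg (coeff (R := R) (ee 1 1)) heq
  have E2 := congrArg (coeff (R := R) (ee 2 1)) heq
  have E3 := congrArg (coeff (R := R) (ee 3 1)) heq
  rw [coeff_composePS, ee_sum] at E1 E2 E3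
  simp only [map_add, compX0, compX1, coeff_mulAB] at E1 E2 E3
  norm_num [Finset.sum_range_succ, h0, h1, pow_zero, coeff_one,
    c11_1, c11_2, c21_1, c21_2, c21_3, c31_1, c31_2, c31_3, c31_4, cFF11, cFF21, cFF31] at E1 E2 E3
  -- derive 12·a₄ = 2
  have key : (12 : R) * PowerSeries.coeff (R := R) 4 f = 2 := by
    linear_combination (11 : R) * E1 - 8 * E2 + 3 * E3
  -- map to ZMod 4 where 3 is a unit
  have hu : IsUnit ((Int.castRingHom (ZMod 4)) 3) :=
    IsUnit.of_mul_eq_one 3 (by decide)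
  let φ : R →+* ZMod 4 := Localization.awayLift (Int.castRingHom (ZMod 4)) 3 hu
  have := congrArg φ key
  rw [map_mul, map_ofNat, map_ofNat] at this
  have h12 : (12 : ZMod 4) = 0 := by decide
  rw [h12, zero_mul] at this
  exact absurd this (by decide)
end

section
/- Let T be a commutative ring with an action of C₂ = {1,σ} such that ℤ → T is a Galois extension with group C₂ (e.g., T faithfully flat over R = T^{C₂} and T ⊗_R T ≅ T × T via (x⊗y) ↦ (xy, xσ(y))). Then for all i > 0, the group cohomology Hⁱ(C₂; T) vanishes and H⁰(C₂; T) = R. -/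
open TensorProduct

/-- Let `T` be a commutative ring with an action of `C₂ = {1, σ}` which is a Galois
extension of `R = T^{C₂}` with group `C₂` (i.e. `T` is faithfully flat over `R` and
`T ⊗[R] T ≅ T × T` via `x ⊗ y ↦ (xy, x·σ(y))`).  Then the group cohomology of `C₂`
with coefficients in `T` vanishes in positive degrees and equals `R` in degree `0`:
`H^{odd} = ker(1+σ)/im(1−σ) = 0`, `H^{even>0} = ker(1−σ)/im(1+σ) = 0`, `H⁰ = T^σ = R`. -/
theorem stmt_13 (T : Type*) [CommRing T] (σ : T ≃+* T) (hσ : ∀ t, σ (σ t) = t)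
    (R : Subring T) (hR : ∀ t, σ t = t ↔ t ∈ R)
    [Module.FaithfullyFlat R T]
    (hGalois : ∃ e : (T ⊗[R] T) ≃ₗ[R] T × T, ∀ x y : T, e (x ⊗ₜ y) = (x * y, x * σ y)) :
    (∀ t : T, t + σ t = 0 → ∃ s : T, t = s - σ s) ∧
    (∀ t : T, σ t = t → ∃ s : T, t = s + σ s) ∧
    (∀ t : T, σ t = t ↔ t ∈ R) := by
  -- Step 1: there is `z : T` with `z + σ z = 1` (surjectivity of the trace).
  obtain ⟨z, hz⟩ : ∃ z : T, z + σ z = 1 := by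
    obtain ⟨e, he⟩ := hGalois
    obtain ⟨S, hS⟩ := TensorProduct.exists_finset (e.symm (1, 0))
    have hsum : (∑ p ∈ S, p.1 * p.2, ∑ p ∈ S, p.1 * σ p.2) = ((1 : T), (0 : T)) := by
      have := e.apply_symm_apply (1, 0)
      rw [hS, map_sum] at this
      simpa [he, Prod.ext_iff, Prod.fst_sum, Prod.snd_sum, Prod.ext_iff] using this
    have h1 : ∑ p ∈ S, p.1 * p.2 = 1 := (Prod.ext_iff.1 hsum).1
    have h2 : ∑ p ∈ S, p.1 * σ p.2 = 0 := (Prod.ext_iff.1 hsum).2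
    -- the trace map `t ↦ t + σ t`, as an `R`-linear map `T → R`
    have htr : ∀ t : T, t + σ t ∈ R := fun t => (hR _).1 (by rw [map_add, hσ]; ring)
    let tr : T →ₗ[R] R :=
      { toFun := fun t => ⟨t + σ t, htr t⟩
        map_add' := fun a b => Subtype.ext (by simp [map_add]; ring)
        map_smul' := fun r a => Subtype.ext (by
          show (r : T) * a + σ ((r : T) * a) = (r : T) * (a + σ a)
          rw [map_mul, (hR r).2 r.2]; ring) }
    let I : Ideal R := LinearMap.range tr
    have hIT : I • (⊤ : Submodule R T) = ⊤ := by
      rw [eq_top_iff]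
      intro t _
      have key : ∑ p ∈ S, tr (t * p.2) • p.1 = t := by
        have : ∑ p ∈ S, (t * p.2 + σ (t * p.2)) * p.1
            = t * (∑ p ∈ S, p.1 * p.2) + σ t * (∑ p ∈ S, p.1 * σ p.2) := by
          rw [Finset.mul_sum, Finset.mul_sum, ← Finset.sum_add_distrib]
          exact Finset.sum_congr rfl fun p _ => by rw [map_mul]; ring
        simpa [h1, h2, tr, Subring.smul_def, smul_eq_mul] using this
      rw [← key]
      exact Submodule.sum_mem _ fun p _ =>
        Submodule.smul_mem_smul (LinearMap.mem_range_self tr (t * p.2)) trivial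
    have hI : I = ⊤ :=
      ((Module.FaithfullyFlat.iff_flat_and_ideal_smul_eq_top R T).1 inferInstance).2 I hIT
    obtain ⟨z, hz⟩ : (1 : R) ∈ I := hI ▸ trivial
    exact ⟨z, congrArg Subtype.val hz⟩
  refine ⟨fun t ht => ⟨t * z, ?_⟩, fun t ht => ⟨t * z, ?_⟩, hR⟩
  · have : σ t = -t := by linear_combination ht
    rw [map_mul, this]
    linear_combination -t * hz
  · rw [map_mul, ht]
    linear_combination -t * hz
end

section
/- Let p be an odd prime. There is no ring endomorphism φ of ℤ_p[ζ_p] (the ring of integers of the p-th cyclotomic extension of ℚ_p) such that φ(x) ≡ x^p mod p for all x. -/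
open Polynomial Finset

private lemma aux1 {R : Type*} [CommRing R] (a t : R) :
    ∀ i : ℕ, ∃ s : R, (1 + a*t)^i = 1 + (i : R)*(a*t) + a^2*s := by
  intro i
  induction i with
  | zero => exact ⟨0, by push_cast; ring⟩
  | succ n ih =>
    obtain ⟨s, hs⟩ := ih
    refine ⟨(n : R)*t^2 + s + a*s*t, ?_⟩
    rw [pow_succ, hs]; push_cast; ring

private lemma aux2 {R : Type*} [CommRing R] (a t : R) (n : ℕ) :
    ∃ s : R, ∑ i ∈ range n, (1 + a*t)^i
      = (n : R) + (∑ i ∈ range n, (i : R))*(a*t) + a^2*s := by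
  induction n with
  | zero => exact ⟨0, by simp⟩
  | succ n ih =>
    obtain ⟨s₀, h₀⟩ := ih
    obtain ⟨s₁, h₁⟩ := aux1 a t n
    refine ⟨s₀ + s₁, ?_⟩
    rw [Finset.sum_range_succ, h₀, h₁, Finset.sum_range_succ]
    push_cast; ring

/-- For `p` an odd prime, there is no ring endomorphism `φ` of
`ℤ_p[ζ_p] = ℤ_p[X]/(Φ_p(X))` such that `φ(x) ≡ x^p mod p` for all `x`. -/
theorem stmt_14 (p : ℕ) [Fact p.Prime] (hp : p ≠ 2) :
    ¬∃ φ : (Polynomial ℤ_[p] ⧸ Ideal.span {Polynomial.cyclotomic p ℤ_[p]}) →+*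
        (Polynomial ℤ_[p] ⧸ Ideal.span {Polynomial.cyclotomic p ℤ_[p]}),
      ∀ x, φ x - x ^ p ∈
        Ideal.span {(p : Polynomial ℤ_[p] ⧸ Ideal.span {Polynomial.cyclotomic p ℤ_[p]})} := by
  rintro ⟨φ, hφ⟩
  let I : Ideal (Polynomial ℤ_[p]) := Ideal.span {cyclotomic p ℤ_[p]}
  let Q := Polynomial ℤ_[p] ⧸ I
  let ζ : Q := Ideal.Quotient.mk I X
  -- the cyclotomic relation
  have hrel : ∑ i ∈ range p, ζ ^ i = 0 := by
    have h0 : (Ideal.Quotient.mk I) (cyclotomic p ℤ_[p]) = 0 :=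
      Ideal.Quotient.eq_zero_iff_mem.2 (Ideal.subset_span rfl)
    rw [cyclotomic_prime, map_sum] at h0
    simpa [ζ] using h0
  -- ζ^p = 1
  have hzp : ζ ^ p = 1 := by
    have h1 : ζ ^ p - 1 = 0 := by
      have := congrArg (· * (ζ - 1)) hrel
      simpa only [geom_sum_mul, zero_mul] using this
    exact sub_eq_zero.1 h1
  -- φ ζ = 1 + p * t
  obtain ⟨t, ht⟩ : ∃ t : Q, φ ζ = 1 + (p : Q) * t := by
    have h2 := hφ ζ
    rw [hzp] at h2
    obtain ⟨t, htt⟩ := Ideal.mem_span_singleton'.1 h2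
    exact ⟨t, by linear_combination -htt⟩
  -- the relation for φ ζ
  have hrel2 : ∑ i ∈ range p, (1 + (p : Q) * t) ^ i = 0 := by
    have h3 := congrArg φ hrel
    rw [map_sum, map_zero] at h3
    simpa [map_pow, ht] using h3
  -- Gauss sum: p = 2m+1 and ∑_{i<p} i = p*m
  obtain ⟨m, hm⟩ : ∃ m, p = 2 * m + 1 := by
    rcases (Fact.out : p.Prime).odd_of_ne_two hp with ⟨m, h⟩
    exact ⟨m, h⟩
  have hgauss : (∑ i ∈ range p, i) = p * m := by
    refine Nat.eq_of_mul_eq_mul_right two_pos ?_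
    rw [Finset.sum_range_id_mul_two, hm]
    simp only [Nat.add_sub_cancel]
    ring
  -- conclude p ∈ (p^2)
  obtain ⟨s, hs⟩ := aux2 (p : Q) t p
  have hcast : (∑ i ∈ range p, (i : Q)) = ((p * m : ℕ) : Q) := by
    rw [← hgauss, Nat.cast_sum]
  have hps : (p : Q) = (p : Q)^2 * (-(m * t) - s) := by
    rw [hrel2, hcast] at hs
    push_cast at hs
    have hmul : ((p * m : ℕ) : Q) = (p : Q) * (m : Q) := Nat.cast_mul (α := Polynomial ℤ_[p] ⧸ I) p m
    linear_combination -hs - ((p : Q) * t) * hmul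
  -- p is a nonzerodivisor: Q is free over ℤ_[p]
  have hmonic : (cyclotomic p ℤ_[p]).Monic := cyclotomic.monic p ℤ_[p]
  let A := AdjoinRoot (cyclotomic p ℤ_[p])
  let B : PowerBasis ℤ_[p] A := AdjoinRoot.powerBasis' hmonic
  haveI : Module.IsTorsionFree ℤ_[p] A := B.basis.isTorsionFree
  have key : ∀ y : Q, (p : Q) * y = 0 → y = 0 := by
    intro y hy
    have hsm : (p : ℤ_[p]) • (show A from y) = 0 := by
      rw [Algebra.smul_def, map_natCast]; exact hy
    rcases smul_eq_zero.1 hsm with h | h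
    · exact absurd h (Nat.cast_ne_zero.2 (Fact.out : p.Prime).ne_zero)
    · exact h
  have hone : (1 : Q) = (p : Q) * (-(m * t) - s) := by
    have h0 : ((1 : Q) - (p : Q) * (-(m * t) - s)) = 0 :=
      key ((1 : Q) - (p : Q) * (-(m * t) - s)) (by linear_combination hps)
    linear_combination h0
  -- map to ZMod p via X ↦ 1
  let g : Polynomial ℤ_[p] →+* ZMod p := (PadicInt.toZMod).comp (evalRingHom (1 : ℤ_[p]))
  have hg : ∀ a ∈ I, g a = 0 := by
    intro a ha
    rw [Ideal.mem_span_singleton] at ha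
    obtain ⟨c, rfl⟩ := ha
    have : g (cyclotomic p ℤ_[p]) = 0 := by
      simp only [g, RingHom.comp_apply, coe_evalRingHom, eval_one_cyclotomic_prime]
      rw [map_natCast, ZMod.natCast_self]
    rw [map_mul, this, zero_mul]
  let ψ : Q →+* ZMod p := Ideal.Quotient.lift I g hg
  have hcontra := congrArg ψ hone
  rw [map_one, map_mul, map_natCast, ZMod.natCast_self, zero_mul] at hcontra
  exact one_ne_zero hcontra
end
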